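/- Let G be a first-price poorman parity bidding game with initial vertex v, and suppose a threshold ratio Th(v) exists at v. Let β and γ be finitely supported probability distributions over positive initial budgets for Player 1 and Player 2 respectively, and let W = {(B, C) ∈ supp(β) × supp(γ) : Th(v) < B/(B+C)}. Then: (i) there exists a collection (f_B ∈ S_1(B))_{B∈supp(β)} of Player 1 strategies such that for every collection (g_C ∈ S_2(C))_{C∈supp(γ)} of Player 2 strategies and every (B, C) ∈ W, the play from v induced by f_B and g_C is winning for Player 1; and (ii) there exists a collection (g_C ∈ S_2(C))_{C∈supp(γ)} such that for every collection (f_B ∈ S_1(B))_{B∈supp(β)} and every (B, C) ∈ (supp(β) × supp(γ)) \ W, the play from v induced by f_B and g_C is winning for Player 2. In particular, the value of the partial-information game at v — the optimal probability with which Player 1 wins when the initial budgets are drawn independently from β and γ — equals Σ_{(B,C)∈W} β(B)·γ(C). -/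

import Mathlib

open Filter Finset

noncomputable section

variable {V : Type}

/-- A history: the list of rounds played so far; each round records the vertex
at which the bidding took place, Player 1's bid and Player 2's bid. -/
abbrev GHist (V : Type) : Type := List (V × ℝ × ℝ)

/-- A pure strategy: given the history and the current vertex, produce a bid
and the vertex to move to upon winning the bidding. -/
abbrev GStrat (V : Type) : Type := GHist V → V → ℝ × V

/-- One bidding round: both players bid; the higher bidder moves the token
(ties are resolved in favor of Player 2). -/
def gstep (f g : GStrat V) (hv : GHist V × V) : GHist V × V :=
  (hv.1 ++ [(hv.2, (f hv.1 hv.2).1, (g hv.1 hv.2).1)],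
    if (g hv.1 hv.2).1 < (f hv.1 hv.2).1 then (f hv.1 hv.2).2 else (g hv.1 hv.2).2)

/-- The history and current vertex after `n` rounds of the play induced by the
Player 1 strategy `f` and the Player 2 strategy `g` from the initial vertex `v0`. -/
def ghist (f g : GStrat V) (v0 : V) : ℕ → GHist V × V
  | 0 => ([], v0)
  | n + 1 => gstep f g (ghist f g v0 n)

/-- The vertex visited at time `n`. -/
def gvtx (f g : GStrat V) (v0 : V) (n : ℕ) : V := (ghist f g v0 n).2

/-- First-price bidding: only the winner pays (to the bank, under poorman
bidding).  Player 1's total investment along a history. -/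
def p1Spent (h : GHist V) : ℝ := (h.map fun r => if r.2.2 < r.2.1 then r.2.1 else 0).sum

/-- Player 2's total investment along a history. -/
def p2Spent (h : GHist V) : ℝ := (h.map fun r => if r.2.2 < r.2.1 then 0 else r.2.2).sum

/-- `f ∈ S_1(B)` under first-price poorman bidding, on the graph with edge
relation `E`: along any play consistent with `f`, all prescribed bids are
nonnegative and within Player 1's remaining budget (initial budget `B`), and
all prescribed moves follow edges of the graph. -/
def p1Legal (E : V → V → Prop) (f : GStrat V) (B : ℝ) : Prop :=
  ∀ g : GStrat V, ∀ v0 : V, ∀ n : ℕ,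
    0 ≤ (f (ghist f g v0 n).1 (ghist f g v0 n).2).1 ∧
    (f (ghist f g v0 n).1 (ghist f g v0 n).2).1 ≤ B - p1Spent (ghist f g v0 n).1 ∧
    E (ghist f g v0 n).2 (f (ghist f g v0 n).1 (ghist f g v0 n).2).2

/-- `g ∈ S_2(C)` under first-price poorman bidding. -/
def p2Legal (E : V → V → Prop) (g : GStrat V) (C : ℝ) : Prop :=
  ∀ f : GStrat V, ∀ v0 : V, ∀ n : ℕ,
    0 ≤ (g (ghist f g v0 n).1 (ghist f g v0 n).2).1 ∧
    (g (ghist f g v0 n).1 (ghist f g v0 n).2).1 ≤ C - p2Spent (ghist f g v0 n).1 ∧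
    E (ghist f g v0 n).2 (g (ghist f g v0 n).1 (ghist f g v0 n).2).2

/-- The parity objective with index labeling `idx`: Player 1 wins the play `π`
iff the highest index visited infinitely often is odd. -/
def P1Wins (idx : V → ℕ) (π : ℕ → V) : Prop :=
  Odd (sSup {k : ℕ | ∃ᶠ m in Filter.atTop, idx (π m) = k})

/-- A finitely supported budget distribution over positive reals. -/
structure BudgetDist where
  supp : Finset ℝ
  prob : ℝ → ℝ
  supp_pos : ∀ b ∈ supp, 0 < b
  prob_pos : ∀ b ∈ supp, 0 < prob b
  prob_sum : ∑ b ∈ supp, prob b = 1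

/-- A trivially legal strategy: bid 0, move along some edge. -/
def gtriv (E : V → V → Prop) (hE : ∀ u : V, ∃ w : V, E u w) : GStrat V :=
  fun _ u => (0, Classical.choose (hE u))

lemma p1Legal_mono {E : V → V → Prop} {f : GStrat V} {B B' : ℝ} (h : B ≤ B')
    (hf : p1Legal E f B) : p1Legal E f B' := fun g v0 n =>
  ⟨(hf g v0 n).1, le_trans (hf g v0 n).2.1 (by linarith), (hf g v0 n).2.2⟩

lemma p2Legal_mono {E : V → V → Prop} {g : GStrat V} {C C' : ℝ} (h : C ≤ C')
    (hg : p2Legal E g C) : p2Legal E g C' := fun f v0 n =>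
  ⟨(hg f v0 n).1, le_trans (hg f v0 n).2.1 (by linarith), (hg f v0 n).2.2⟩

lemma p1Spent_gtriv (E : V → V → Prop) (hE : ∀ u : V, ∃ w : V, E u w)
    (g : GStrat V) (v0 : V) (n : ℕ) : p1Spent (ghist (gtriv E hE) g v0 n).1 = 0 := by
  induction n with
  | zero => simp [ghist, p1Spent]
  | succ n ih =>
      simp only [ghist, gstep, p1Spent, List.map_append, List.sum_append] at ih ⊢
      simp [ih, gtriv]

lemma p2Spent_gtriv (E : V → V → Prop) (hE : ∀ u : V, ∃ w : V, E u w)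
    (f : GStrat V) (v0 : V) (n : ℕ) : p2Spent (ghist f (gtriv E hE) v0 n).1 = 0 := by
  induction n with
  | zero => simp [ghist, p2Spent]
  | succ n ih =>
      simp only [ghist, gstep, p2Spent, List.map_append, List.sum_append] at ih ⊢
      simp [ih, gtriv]

lemma gtriv_p1Legal {E : V → V → Prop} (hE : ∀ u : V, ∃ w : V, E u w) {B : ℝ}
    (hB : 0 ≤ B) : p1Legal E (gtriv E hE) B := by
  intro g v0 n
  refine ⟨le_refl 0, ?_, Classical.choose_spec (hE _)⟩
  rw [p1Spent_gtriv]
  simpa [gtriv] using hB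

lemma gtriv_p2Legal {E : V → V → Prop} (hE : ∀ u : V, ∃ w : V, E u w) {C : ℝ}
    (hC : 0 ≤ C) : p2Legal E (gtriv E hE) C := by
  intro f v0 n
  refine ⟨le_refl 0, ?_, Classical.choose_spec (hE _)⟩
  rw [p2Spent_gtriv]
  simpa [gtriv] using hC

open Classical in
/-- partial-information parity first-price (poorman) bidding
games.  Let `Th` be a threshold ratio at the initial vertex `v` of a finite
parity bidding game, let `β, γ` be finitely supported budget distributions for
the two players, and `W = {(B, C) ∈ supp β × supp γ : Th < B/(B+C)}`.  Then:
(i) Player 1 has a collection of strategies winning uniformly on `W`;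
(ii) Player 2 has a collection of strategies winning uniformly off `W`; and
in particular the value — the optimal probability with which Player 1 wins —
equals `∑_{(B,C) ∈ W} β(B)·γ(C)`. -/
theorem stmt_0 [Fintype V] (E : V → V → Prop) (hE : ∀ u : V, ∃ w : V, E u w)
    (d : ℕ) (idx : V → ℕ) (hidx : ∀ u : V, idx u ∈ Finset.Icc 1 d)
    (v : V) (Th : ℝ) (hTh01 : Th ∈ Set.Icc (0 : ℝ) 1)
    (hThUp : ∀ B C : ℝ, 0 < B → 0 < C → Th < B / (B + C) →
      ∃ f : GStrat V, p1Legal E f B ∧ ∀ g : GStrat V, p2Legal E g C →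
        P1Wins idx (fun m => gvtx f g v m))
    (hThLow : ∀ B C : ℝ, 0 < B → 0 < C → B / (B + C) ≤ Th →
      ∃ g : GStrat V, p2Legal E g C ∧ ∀ f : GStrat V, p1Legal E f B →
        ¬ P1Wins idx (fun m => gvtx f g v m))
    (β γ : BudgetDist)
    (W : Finset (ℝ × ℝ))
    (hW : W = (β.supp ×ˢ γ.supp).filter fun p => Th < p.1 / (p.1 + p.2)) :
    (∃ F : ℝ → GStrat V, (∀ B ∈ β.supp, p1Legal E (F B) B) ∧
      ∀ G : ℝ → GStrat V, (∀ C ∈ γ.supp, p2Legal E (G C) C) →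
        ∀ p ∈ W, P1Wins idx (fun m => gvtx (F p.1) (G p.2) v m)) ∧
    (∃ G : ℝ → GStrat V, (∀ C ∈ γ.supp, p2Legal E (G C) C) ∧
      ∀ F : ℝ → GStrat V, (∀ B ∈ β.supp, p1Legal E (F B) B) →
        ∀ p ∈ (β.supp ×ˢ γ.supp) \ W,
          ¬ P1Wins idx (fun m => gvtx (F p.1) (G p.2) v m)) ∧
    (∃ F : ℝ → GStrat V, (∀ B ∈ β.supp, p1Legal E (F B) B) ∧
      ∀ G : ℝ → GStrat V, (∀ C ∈ γ.supp, p2Legal E (G C) C) →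
        ∑ p ∈ W, β.prob p.1 * γ.prob p.2 ≤
          ∑ p ∈ β.supp ×ˢ γ.supp, β.prob p.1 * γ.prob p.2 *
            (if P1Wins idx (fun m => gvtx (F p.1) (G p.2) v m) then 1 else 0)) ∧
    (∃ G : ℝ → GStrat V, (∀ C ∈ γ.supp, p2Legal E (G C) C) ∧
      ∀ F : ℝ → GStrat V, (∀ B ∈ β.supp, p1Legal E (F B) B) →
        ∑ p ∈ β.supp ×ˢ γ.supp, β.prob p.1 * γ.prob p.2 *
            (if P1Wins idx (fun m => gvtx (F p.1) (G p.2) v m) then 1 else 0) ≤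
          ∑ p ∈ W, β.prob p.1 * γ.prob p.2) := by
  classical
  -- A uniform collection of Player-1 strategies winning on W
  have key1 : ∀ B : ℝ, ∃ f : GStrat V, (B ∈ β.supp → p1Legal E f B) ∧
      ∀ C ∈ γ.supp, B ∈ β.supp → Th < B / (B + C) →
        ∀ g : GStrat V, p2Legal E g C → P1Wins idx (fun m => gvtx f g v m) := by
    intro B
    by_cases hB : B ∈ β.supp
    · by_cases h : (γ.supp.filter fun C => Th < B / (B + C)).Nonempty
      · have hmem := Finset.max'_mem _ h
        obtain ⟨f, hf, hwin⟩ := hThUp B ((γ.supp.filter fun C => Th < B / (B + C)).max' h)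
          (β.supp_pos B hB) (γ.supp_pos _ (Finset.mem_of_mem_filter _ hmem))
          ((Finset.mem_filter.mp hmem).2)
        refine ⟨f, fun _ => hf, fun C hC _ hr g hg => hwin g ?_⟩
        have hCm : C ∈ γ.supp.filter fun C' => Th < B / (B + C') :=
          Finset.mem_filter.mpr ⟨hC, hr⟩
        exact p2Legal_mono (Finset.le_max' _ C hCm) hg
      · refine ⟨gtriv E hE, fun _ => gtriv_p1Legal hE (le_of_lt (β.supp_pos B hB)),
          fun C hC _ hr => absurd ⟨C, Finset.mem_filter.mpr ⟨hC, hr⟩⟩ h⟩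
    · exact ⟨gtriv E hE, fun h => absurd h hB, fun C hC h => absurd h hB⟩
  choose F hFleg hFwin using key1
  -- A uniform collection of Player-2 strategies winning off W
  have key2 : ∀ C : ℝ, ∃ g : GStrat V, (C ∈ γ.supp → p2Legal E g C) ∧
      ∀ B ∈ β.supp, C ∈ γ.supp → B / (B + C) ≤ Th →
        ∀ f : GStrat V, p1Legal E f B → ¬ P1Wins idx (fun m => gvtx f g v m) := by
    intro C
    by_cases hC : C ∈ γ.supp
    · by_cases h : (β.supp.filter fun B => B / (B + C) ≤ Th).Nonempty
      · have hmem := Finset.max'_mem _ h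
        obtain ⟨g, hg, hwin⟩ := hThLow ((β.supp.filter fun B => B / (B + C) ≤ Th).max' h) C
          (β.supp_pos _ (Finset.mem_of_mem_filter _ hmem)) (γ.supp_pos C hC)
          ((Finset.mem_filter.mp hmem).2)
        refine ⟨g, fun _ => hg, fun B hB _ hr f hf => hwin f ?_⟩
        have hBm : B ∈ β.supp.filter fun B' => B' / (B' + C) ≤ Th :=
          Finset.mem_filter.mpr ⟨hB, hr⟩
        exact p1Legal_mono (Finset.le_max' _ B hBm) hf
      · refine ⟨gtriv E hE, fun _ => gtriv_p2Legal hE (le_of_lt (γ.supp_pos C hC)),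
          fun B hB _ hr => absurd ⟨B, Finset.mem_filter.mpr ⟨hB, hr⟩⟩ h⟩
    · exact ⟨gtriv E hE, fun h => absurd h hC, fun B hB h => absurd h hC⟩
  choose G hGleg hGwin using key2
  have hWin1 : ∀ Gc : ℝ → GStrat V, (∀ C ∈ γ.supp, p2Legal E (Gc C) C) →
      ∀ p ∈ W, P1Wins idx (fun m => gvtx (F p.1) (Gc p.2) v m) := by
    intro Gc hGc p hp
    rw [hW, Finset.mem_filter, Finset.mem_product] at hp
    exact hFwin p.1 p.2 hp.1.2 hp.1.1 hp.2 (Gc p.2) (hGc p.2 hp.1.2)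
  have hWin2 : ∀ Fc : ℝ → GStrat V, (∀ B ∈ β.supp, p1Legal E (Fc B) B) →
      ∀ p ∈ (β.supp ×ˢ γ.supp) \ W, ¬ P1Wins idx (fun m => gvtx (Fc p.1) (G p.2) v m) := by
    intro Fc hFc p hp
    rw [Finset.mem_sdiff, Finset.mem_product, hW, Finset.mem_filter,
      Finset.mem_product] at hp
    have hr : p.1 / (p.1 + p.2) ≤ Th := by
      by_contra hcon
      exact hp.2 ⟨hp.1, not_le.mp hcon⟩
    exact hGwin p.2 p.1 hp.1.1 hp.1.2 hr (Fc p.1) (hFc p.1 hp.1.1)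
  have hWsub : W ⊆ β.supp ×ˢ γ.supp := by rw [hW]; exact Finset.filter_subset _ _
  refine ⟨⟨F, fun B hB => hFleg B hB, hWin1⟩, ⟨G, fun C hC => hGleg C hC, hWin2⟩,
    ⟨F, fun B hB => hFleg B hB, ?_⟩, ⟨G, fun C hC => hGleg C hC, ?_⟩⟩
  · intro Gc hGc
    calc ∑ p ∈ W, β.prob p.1 * γ.prob p.2
        = ∑ p ∈ W, β.prob p.1 * γ.prob p.2 *
            (if P1Wins idx (fun m => gvtx (F p.1) (Gc p.2) v m) then 1 else 0) := by
          refine Finset.sum_congr rfl fun p hp => ?_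
          rw [if_pos (hWin1 Gc hGc p hp), mul_one]
      _ ≤ _ := by
          refine Finset.sum_le_sum_of_subset_of_nonneg hWsub fun p hp _ => ?_
          rw [Finset.mem_product] at hp
          have h1 := le_of_lt (β.prob_pos p.1 hp.1)
          have h2 := le_of_lt (γ.prob_pos p.2 hp.2)
          positivity
  · intro Fc hFc
    have hsplit : β.supp ×ˢ γ.supp = W ∪ ((β.supp ×ˢ γ.supp) \ W) := by
      rw [Finset.union_sdiff_of_subset hWsub]
    rw [hsplit, Finset.sum_union (Finset.disjoint_sdiff)]
    have hzero : ∑ p ∈ (β.supp ×ˢ γ.supp) \ W, β.prob p.1 * γ.prob p.2 *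
        (if P1Wins idx (fun m => gvtx (Fc p.1) (G p.2) v m) then 1 else 0) = 0 := by
      refine Finset.sum_eq_zero fun p hp => ?_
      rw [if_neg (hWin2 Fc hFc p hp), mul_zero]
    rw [hzero, add_zero]
    refine Finset.sum_le_sum fun p hp => ?_
    have hp' := hWsub hp
    rw [Finset.mem_product] at hp'
    have h1 := le_of_lt (β.prob_pos p.1 hp'.1)
    have h2 := le_of_lt (γ.prob_pos p.2 hp'.2)
    split_ifs <;> nlinarith

end
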